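/- arXiv:2101.04999 — 7 statements merged into one kernel-verified Lean document; each statement's English description precedes it below -/
import Mathlib

section
/- Let m, N be natural numbers with N ≥ 2 and gcd(m, N) = 1. Write β = ord_m(N) for the multiplicative order of m modulo N and m^β = μN + 1. Then the multiplicative order of m modulo N² equals β · N / gcd(μ, N). -/
lemma binom_aux (a n : ℕ) : ∀ k : ℕ, ∃ c : ℕ, (a*n+1)^k = 1 + k*(a*n) + n^2*c := by
  intro k
  induction k with
  | zero => exact ⟨0, by ring⟩
  | succ k ih =>
    obtain ⟨c, hc⟩ := ih
    exact ⟨k*a^2 + c*(a*n+1), by rw [pow_succ, hc]; ring⟩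

theorem stmt_1 (m N μ : ℕ) (hN : 2 ≤ N) (hcop : Nat.Coprime m N)
    (hμ : m ^ orderOf (m : ZMod N) = μ * N + 1) :
    orderOf (m : ZMod (N ^ 2)) = orderOf (m : ZMod N) * N / Nat.gcd μ N := by
  have hN0 : 0 < N := by omega
  haveI : NeZero N := ⟨by omega⟩
  haveI : NeZero (N^2) := ⟨by positivity⟩
  set β := orderOf (m : ZMod N) with hβ
  have hu : IsUnit (m : ZMod N) := (ZMod.isUnit_iff_coprime m N).mpr hcop
  have hβpos : 0 < β := by
    obtain ⟨u, hu⟩ := hu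
    rw [hβ, ← hu, orderOf_units]
    exact orderOf_pos u
  have key : ∀ s : ℕ, ((m : ZMod (N^2))^(β*s) = 1 ↔ N ∣ s*μ) := by
    intro s
    obtain ⟨c, hc⟩ := binom_aux μ N s
    have hpow : (m:ℕ)^(β*s) = 1 + s*(μ*N) + N^2*c := by
      rw [pow_mul, hμ, hc]
    have h1 : (m : ZMod (N^2))^(β*s) = 1 + ((s*(μ*N) : ℕ) : ZMod (N^2)) := by
      calc (m : ZMod (N^2))^(β*s) = ((m^(β*s) : ℕ) : ZMod (N^2)) := by push_cast; ring
        _ = ((1 + s*(μ*N) + N^2*c : ℕ) : ZMod (N^2)) := by rw [hpow]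
        _ = 1 + ((s*(μ*N):ℕ) : ZMod (N^2)) := by
            push_cast
            rw [show ((N:ZMod (N^2)))^2 = ((N^2 : ℕ) : ZMod (N^2)) by push_cast; ring,
              ZMod.natCast_self]
            ring
    rw [h1, add_eq_left, ZMod.natCast_eq_zero_iff]
    rw [show s*(μ*N) = (s*μ)*N by ring, pow_two]
    exact Nat.mul_dvd_mul_iff_right hN0
  set d := Nat.gcd μ N with hd
  have hdpos : 0 < d := Nat.gcd_pos_of_pos_right _ hN0
  have hdN : d ∣ N := Nat.gcd_dvd_right μ N
  have hdμ : d ∣ μ := Nat.gcd_dvd_left μ N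
  have h1 : (m : ZMod (N^2))^(β*(N/d)) = 1 := by
    rw [key]
    obtain ⟨μ', hμ'⟩ := hdμ
    exact ⟨μ', by rw [hμ', ← mul_assoc, Nat.div_mul_cancel hdN]⟩
  set t := orderOf (m : ZMod (N^2)) with ht
  have htd : t ∣ β*(N/d) := orderOf_dvd_of_pow_eq_one h1
  have hβt : β ∣ t := by
    have h2 : (m : ZMod (N^2))^t = 1 := pow_orderOf_eq_one _
    have h3 : (m : ZMod N)^t = 1 := by
      have := congrArg (ZMod.castHom (dvd_pow_self N two_ne_zero) (ZMod N)) h2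
      rwa [map_pow, map_natCast, map_one] at this
    exact orderOf_dvd_of_pow_eq_one h3
  obtain ⟨s, hs⟩ := hβt
  have h4 : (m : ZMod (N^2))^(β*s) = 1 := by rw [← hs]; exact pow_orderOf_eq_one _
  have h5 : N ∣ s*μ := (key s).mp h4
  have h6 : N/d ∣ s := by
    have hco : Nat.Coprime (N/d) (μ/d) :=
      (Nat.coprime_div_gcd_div_gcd (Nat.gcd_pos_of_pos_right μ hN0)).symm
    have h7 : (N/d) * d ∣ s * (μ/d) * d := by
      rw [Nat.div_mul_cancel hdN, mul_assoc, Nat.div_mul_cancel hdμ]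
      exact h5
    exact hco.dvd_of_dvd_mul_right ((Nat.mul_dvd_mul_iff_right hdpos).mp h7)
  have h8 : β*(N/d) ∣ t := by rw [hs]; exact mul_dvd_mul_left β h6
  rw [Nat.dvd_antisymm htd h8, Nat.mul_div_assoc β hdN]
end

section
/- Let m ≥ 2 and let P be a finite set of primes none of which divides m. Then there exists a constant C > 0 such that for every positive integer N all of whose prime factors lie in P (with gcd(N, m) = 1), one has ord_m(N) / N ≥ C. -/
open Finset

/-- Geometric series identity in ℕ. -/
lemma geom_nat (m k : ℕ) (hm : 1 ≤ m) :
    m ^ k - 1 = (m - 1) * ∑ i ∈ Finset.range k, m ^ i := by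
  have h : ((m : ℤ) - 1) * ∑ i ∈ Finset.range k, (m : ℤ) ^ i = (m : ℤ) ^ k - 1 := by
    rw [mul_comm]; exact geom_sum_mul (m : ℤ) k
  have h1 : (1 : ℕ) ≤ m ^ k := Nat.one_le_pow _ _ hm
  have := h.symm
  zify [hm, h1]
  linarith [h]

/-- The key valuation bound: v_p(m^k - 1) ≤ c + v_p(k). -/
lemma key (m : ℕ) (hm : 2 ≤ m) (p : ℕ) (hp : p.Prime) (hpm : ¬ p ∣ m) :
    ∃ c : ℕ, ∀ k : ℕ, 0 < k → padicValNat p (m ^ k - 1) ≤ c + padicValNat p k := by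
  haveI : Fact p.Prime := ⟨hp⟩
  rcases eq_or_ne p 2 with rfl | hp2
  · -- p = 2, m odd
    have hmodd : ¬ 2 ∣ m := hpm
    refine ⟨padicValNat 2 (m + 1) + padicValNat 2 (m - 1), fun k hk => ?_⟩
    rcases Nat.even_or_odd k with hke | hko
    · have := padicValNat.pow_two_sub_pow (x := m) (y := 1) (by omega) (by omega)
        hmodd (n := k) hk.ne' hke
      simp only [one_pow] at this
      omega
    · -- k odd : m^k - 1 = (m-1) * odd
      have hgeom := geom_nat m k (by omega)
      have hSodd : ¬ 2 ∣ ∑ i ∈ Finset.range k, m ^ i := by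
        have hm2 : m % 2 = 1 := by omega
        have : (∑ i ∈ Finset.range k, m ^ i) % 2 = (∑ i ∈ Finset.range k, 1) % 2 := by
          rw [Finset.sum_nat_mod, Finset.sum_nat_mod (f := fun _ => 1)]
          congr 1
          refine Finset.sum_congr rfl fun i _ => ?_
          rw [Nat.pow_mod, hm2, one_pow]
        rw [Finset.sum_const, Finset.card_range, smul_eq_mul, mul_one] at this
        have hk2 : k % 2 = 1 := Nat.odd_iff.mp hko
        omega
      have hS0 : (∑ i ∈ Finset.range k, m ^ i) ≠ 0 := fun h => by
        rw [h] at hSodd; exact hSodd (dvd_zero 2)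
      rw [hgeom, padicValNat.mul (by omega) hS0,
        padicValNat.eq_zero_of_not_dvd hSodd]
      omega
  · -- p odd
    have hpodd : Odd p := hp.odd_of_ne_two hp2
    have hcop : Nat.Coprime m p := ((hp.coprime_iff_not_dvd).mpr hpm).symm
    set u : (ZMod p)ˣ := ZMod.unitOfCoprime m hcop with hu
    set d : ℕ := orderOf u with hd
    have hd0 : 0 < d := orderOf_pos u
    refine ⟨padicValNat p (m ^ d - 1), fun k hk => ?_⟩
    by_cases hdvd : p ∣ m ^ k - 1
    · -- then d ∣ k
      have hmk1 : (1 : ℕ) ≤ m ^ k := Nat.one_le_pow _ _ (by omega)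
      have hmod : (m : ZMod p) ^ k = 1 := by
        have : ((m ^ k : ℕ) : ZMod p) = ((1 : ℕ) : ZMod p) :=
          (ZMod.natCast_eq_natCast_iff _ _ _).mpr
            ((Nat.modEq_iff_dvd' hmk1).mpr hdvd).symm
        push_cast at this
        exact this
      have humod : u ^ k = 1 := by
        ext
        push_cast
        rw [ZMod.coe_unitOfCoprime]
        exact hmod
      have hdk : d ∣ k := orderOf_dvd_of_pow_eq_one humod
      obtain ⟨j, rfl⟩ := hdk
      have hj0 : j ≠ 0 := by rintro rfl; simp at hk
      have h1m : 1 < m ^ d := Nat.one_lt_pow hd0.ne' (by omega)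
      have hpd : p ∣ m ^ d - 1 := by
        have : (m : ZMod p) ^ d = 1 := by
          have := pow_orderOf_eq_one u
          have h2 : ((u : ZMod p)) ^ d = 1 := by rw [← Units.val_pow_eq_pow_val, this, Units.val_one]
          rwa [ZMod.coe_unitOfCoprime] at h2
        have : ((m ^ d : ℕ) : ZMod p) = ((1 : ℕ) : ZMod p) := by push_cast; exact this
        exact (Nat.modEq_iff_dvd' h1m.le).mp ((ZMod.natCast_eq_natCast_iff _ _ _).mp this).symm
      have hx : ¬ p ∣ m ^ d := fun h => hpm (hp.dvd_of_dvd_pow h)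
      have := padicValNat.pow_sub_pow (x := m ^ d) (y := 1) hpodd h1m
        (by simpa using hpd) hx (n := j) hj0
      simp only [one_pow, ← pow_mul] at this
      rw [this]
      have hjk : padicValNat p j ≤ padicValNat p (d * j) := by
        rw [← padicValNat_dvd_iff_le (show d * j ≠ 0 by positivity)]
        exact (pow_padicValNat_dvd).trans (dvd_mul_left _ _)
      omega
    · rw [padicValNat.eq_zero_of_not_dvd hdvd]
      omega

theorem stmt_5 (m : ℕ) (hm : 2 ≤ m) (P : Finset ℕ)
    (hP : ∀ p ∈ P, Nat.Prime p ∧ ¬ p ∣ m) :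
    ∃ C : ℝ, 0 < C ∧ ∀ N : ℕ, 0 < N → Nat.Coprime N m →
      (∀ p : ℕ, p.Prime → p ∣ N → p ∈ P) →
      C ≤ (orderOf (m : ZMod N) : ℝ) / (N : ℝ) := by
  have hkey := fun (p : ℕ) (hp : p ∈ P) => key m hm p (hP p hp).1 (hP p hp).2
  choose c hc using hkey
  set D : ℕ := ∏ p ∈ P.attach, p.1 ^ c p.1 p.2 with hD
  have hD0 : 0 < D := Finset.prod_pos fun p _ => pow_pos (hP p.1 p.2).1.pos _
  refine ⟨1 / D, by positivity, fun N hN hcop hprimes => ?_⟩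
  set r : ℕ := orderOf (m : ZMod N) with hr
  haveI : NeZero N := ⟨hN.ne'⟩
  have hr0 : 0 < r := by
    have hcop' : Nat.Coprime m N := hcop.symm
    have : orderOf (ZMod.unitOfCoprime m hcop') = r := by
      rw [hr, ← ZMod.coe_unitOfCoprime m hcop', orderOf_units]
    rw [← this]
    exact orderOf_pos _
  -- N ∣ m^r - 1
  have hmr1 : (1 : ℕ) ≤ m ^ r := Nat.one_le_pow _ _ (by omega)
  have hNdvd : N ∣ m ^ r - 1 := by
    have h1 : (m : ZMod N) ^ r = 1 := pow_orderOf_eq_one _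
    have : ((m ^ r : ℕ) : ZMod N) = ((1 : ℕ) : ZMod N) := by push_cast; exact h1
    exact (Nat.modEq_iff_dvd' hmr1).mp ((ZMod.natCast_eq_natCast_iff _ _ _).mp this).symm
  -- N ∣ r * D
  have hND : N ∣ r * D := by
    rw [← Nat.factorization_le_iff_dvd hN.ne' (by positivity)]
    intro p
    by_cases hpN : p.Prime ∧ p ∣ N
    · obtain ⟨hp, hpdvd⟩ := hpN
      haveI : Fact p.Prime := ⟨hp⟩
      have hpP : p ∈ P := hprimes p hp hpdvd
      have hm1 : m ^ r - 1 ≠ 0 := by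
        have : 1 < m ^ r := Nat.one_lt_pow hr0.ne' (by omega)
        omega
      have h1 : N.factorization p = padicValNat p N := Nat.factorization_def N hp
      have h2 : padicValNat p N ≤ padicValNat p (m ^ r - 1) := by
        rw [← padicValNat_dvd_iff_le hm1]
        exact (pow_padicValNat_dvd).trans hNdvd
      have h3 := hc p hpP r hr0
      have hD' : p ^ c p hpP ∣ D :=
        Finset.dvd_prod_of_mem (fun q => q.1 ^ c q.1 q.2) (Finset.mem_attach P ⟨p, hpP⟩)
      have h4 : p ^ (c p hpP + padicValNat p r) ∣ r * D := by
        rw [pow_add, mul_comm r D]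
        exact mul_dvd_mul hD' pow_padicValNat_dvd
      have h5 : c p hpP + padicValNat p r ≤ (r * D).factorization p := by
        rw [← hp.pow_dvd_iff_le_factorization (by positivity)]
        exact h4
      omega
    · have : N.factorization p = 0 := by
        rcases not_and_or.mp hpN with h | h
        · simp [Nat.factorization_eq_zero_of_not_prime N h]
        · exact Nat.factorization_eq_zero_of_not_dvd h
      simp [this]
  have hle : (N : ℝ) ≤ (r : ℝ) * D := by
    exact_mod_cast Nat.le_of_dvd (by positivity) hND
  rw [div_le_div_iff₀ (by positivity) (by exact_mod_cast hN)]
  calc (1 : ℝ) * N ≤ r * D := by rw [one_mul]; exact hle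
    _ = r * D := rfl
end

section
/- Let m ≥ 2 and let s be a positive unit of the ring ℤ[1/m]. Then there exist infinitely many integers N > 0 coprime to m such that the image of s in the unit group (ℤ/Nℤ)× has odd multiplicative order. -/
/-- `ℤ[1/m]` as a subring of `ℚ`. -/
def Zinv (m : ℕ) : Subring ℚ := Subring.closure {((m : ℚ))⁻¹}

lemma Zinv.den_dvd (m : ℕ) (hm : 2 ≤ m) {x : ℚ} (hx : x ∈ Zinv m) :
    ∃ j : ℕ, x.den ∣ m ^ j := by
  induction hx using Subring.closure_induction with
  | mem x hx =>
      rcases hx with rfl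
      exact ⟨1, by rw [Rat.inv_natCast_den_of_pos (by omega), pow_one]⟩
  | zero => exact ⟨0, by simp⟩
  | one => exact ⟨0, by simp⟩
  | add x y hx hy ihx ihy =>
      obtain ⟨j, hj⟩ := ihx; obtain ⟨k, hk⟩ := ihy
      exact ⟨j + k, (Rat.add_den_dvd x y).trans (by rw [pow_add]; exact mul_dvd_mul hj hk)⟩
  | neg x hx ih => simpa using ih
  | mul x y hx hy ihx ihy =>
      obtain ⟨j, hj⟩ := ihx; obtain ⟨k, hk⟩ := ihy
      exact ⟨j + k, (Rat.mul_den_dvd x y).trans (by rw [pow_add]; exact mul_dvd_mul hj hk)⟩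

lemma Zinv.coe_algebraMap (m : ℕ) (n : ℤ) :
    (((algebraMap ℤ (Zinv m)) n : Zinv m) : ℚ) = (n : ℚ) := by
  rw [algebraMap_int_eq, eq_intCast]
  norm_cast

lemma Zinv.away (m : ℕ) (hm : 2 ≤ m) : IsLocalization.Away ((m : ℤ)) (Zinv m) := by
  apply IsLocalization.Away.mk
  · refine IsUnit.of_mul_eq_one ⟨(m : ℚ)⁻¹, Subring.subset_closure rfl⟩ ?_
    ext
    push_cast [Zinv.coe_algebraMap]
    exact mul_inv_cancel₀ (by positivity)
  · intro z
    obtain ⟨j, hj⟩ := Zinv.den_dvd m hm z.2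
    set k : ℕ := m ^ j / (z : ℚ).den with hk
    have hdk : ((z : ℚ).den : ℚ) * (k : ℚ) = (m : ℚ) ^ j := by
      rw [← Nat.cast_mul, Nat.mul_div_cancel' hj]; push_cast; ring
    refine ⟨j, (z : ℚ).num * (k : ℤ), ?_⟩
    ext
    push_cast [Zinv.coe_algebraMap]
    rw [← hdk, ← mul_assoc, Rat.mul_den_eq_num]
  · intro x y h
    have : ((x : ℤ) : ℚ) = ((y : ℤ) : ℚ) := by
      have := congrArg (fun z : Zinv m => (z : ℚ)) h
      simpa [Zinv.coe_algebraMap] using this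
    have hxy : x = y := by exact_mod_cast this
    exact ⟨0, by rw [hxy]⟩

theorem stmt_10 (m : ℕ) (hm : 2 ≤ m) (s : (Zinv m)ˣ) (hs : (0 : ℚ) < ((s : Zinv m) : ℚ)) :
    {N : ℕ | 0 < N ∧ Nat.Coprime N m ∧
      ∃ f : Zinv m →+* ZMod N, Odd (orderOf (f (s : Zinv m)))}.Infinite := by
  classical
  haveI := Zinv.away m hm
  set q0 : ℚ := ((s : Zinv m) : ℚ) with hq0
  have hnum : 0 < q0.num := Rat.num_pos.mpr hs
  obtain ⟨a, ha⟩ : ∃ a : ℕ, (a : ℤ) = q0.num := ⟨q0.num.toNat, Int.toNat_of_nonneg hnum.le⟩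
  set b : ℕ := q0.den with hbdef
  have ha0 : 0 < a := by omega
  have hb0 : 0 < b := q0.pos
  have hab : Nat.Coprime a b := by
    have h1 : a = q0.num.natAbs := by omega
    rw [h1]; exact q0.reduced
  obtain ⟨j, hj⟩ : ∃ j : ℕ, b ∣ m ^ j := Zinv.den_dvd m hm (s : Zinv m).2
  apply Set.infinite_of_forall_exists_gt
  intro B
  obtain ⟨q, hqge, hq⟩ := Nat.exists_infinite_primes (max m B + 2)
  have hqm : m < q := by omega
  have hqB : B < q := by omega
  have hqodd : Odd q := hq.odd_of_ne_two (by omega)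
  set N : ℕ := ∑ i ∈ Finset.range q, a ^ i * b ^ (q - 1 - i) with hN
  have hqN : q ≤ N := by
    have := Finset.sum_le_sum (s := Finset.range q)
      (f := fun _ => 1) (g := fun i => a ^ i * b ^ (q - 1 - i))
      (fun i _ => Nat.one_le_iff_ne_zero.mpr (by positivity))
    simpa using this
  have hN0 : 0 < N := by omega
  have hNcast : (N : ℤ) = ∑ i ∈ Finset.range q, (a : ℤ) ^ i * (b : ℤ) ^ (q - 1 - i) := by
    rw [hN]; push_cast; rfl
  have hdvd : (N : ℤ) ∣ (a : ℤ) ^ q - (b : ℤ) ^ q :=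
    ⟨(a : ℤ) - (b : ℤ), by rw [hNcast]; exact (geom_sum₂_mul (a : ℤ) (b : ℤ) q).symm⟩
  -- coprimality of N and m
  have hcop : Nat.Coprime N m := by
    by_contra hcon
    set p := (Nat.gcd N m).minFac with hpdef
    have hp : p.Prime := Nat.minFac_prime hcon
    have hpN : p ∣ N := (Nat.minFac_dvd _).trans (Nat.gcd_dvd_left _ _)
    have hpm : p ∣ m := (Nat.minFac_dvd _).trans (Nat.gcd_dvd_right _ _)
    haveI : Fact p.Prime := ⟨hp⟩
    have hpltq : p < q := lt_of_le_of_lt (Nat.le_of_dvd (by omega) hpm) hqm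
    have hNp : (N : ZMod p) = 0 := (ZMod.natCast_eq_zero_iff N p).mpr hpN
    have hABq : (a : ZMod p) ^ q = (b : ZMod p) ^ q := by
      have h2 : (p : ℤ) ∣ (a : ℤ) ^ q - (b : ℤ) ^ q :=
        (Int.natCast_dvd_natCast.mpr hpN).trans hdvd
      have h3 := (ZMod.intCast_zmod_eq_zero_iff_dvd ((a : ℤ) ^ q - (b : ℤ) ^ q) p).mpr h2
      push_cast at h3
      exact sub_eq_zero.mp h3
    have hA0 : (a : ZMod p) ≠ 0 := by
      intro h
      have hpa : p ∣ a := (ZMod.natCast_eq_zero_iff a p).mp h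
      have hbq : (b : ZMod p) ^ q = 0 := by rw [← hABq, h, zero_pow (by omega)]
      have hpb : p ∣ b := (ZMod.natCast_eq_zero_iff b p).mp
        (pow_eq_zero_iff (by omega : q ≠ 0) |>.mp hbq)
      have : p ∣ 1 := hab ▸ Nat.dvd_gcd hpa hpb
      exact hp.one_lt.ne' (Nat.dvd_one.mp this)
    have hB0 : (b : ZMod p) ≠ 0 := by
      intro h
      have hpb : p ∣ b := (ZMod.natCast_eq_zero_iff b p).mp h
      have haq : (a : ZMod p) ^ q = 0 := by rw [hABq, h, zero_pow (by omega)]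
      have hpa : p ∣ a := (ZMod.natCast_eq_zero_iff a p).mp
        (pow_eq_zero_iff (by omega : q ≠ 0) |>.mp haq)
      have : p ∣ 1 := hab ▸ Nat.dvd_gcd hpa hpb
      exact hp.one_lt.ne' (Nat.dvd_one.mp this)
    set x : ZMod p := (a : ZMod p) * (b : ZMod p)⁻¹ with hxdef
    have hx0 : x ≠ 0 := mul_ne_zero hA0 (inv_ne_zero hB0)
    have hxq : x ^ q = 1 := by
      rw [hxdef, mul_pow, inv_pow, hABq, mul_inv_cancel₀ (pow_ne_zero _ hB0)]
    have hx1 : x ^ (p - 1) = 1 := ZMod.pow_card_sub_one_eq_one hx0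
    have hxo : orderOf x = 1 := by
      rcases hq.eq_one_or_self_of_dvd _ (orderOf_dvd_of_pow_eq_one hxq) with h | h
      · exact h
      · exfalso
        have hp2 : 2 ≤ p := hp.two_le
        have h6 : q ≤ p - 1 := Nat.le_of_dvd (by omega) (h ▸ orderOf_dvd_of_pow_eq_one hx1)
        omega
    have hAB : (a : ZMod p) = (b : ZMod p) :=
      (mul_inv_eq_one₀ hB0).mp (orderOf_eq_one_iff.mp hxo)
    have hsum : (N : ZMod p) = (q : ZMod p) * (a : ZMod p) ^ (q - 1) := by
      have h4 : (N : ZMod p) = ∑ i ∈ Finset.range q, (a : ZMod p) ^ i * (b : ZMod p) ^ (q - 1 - i) := by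
        rw [hN]; push_cast; rfl
      rw [← hAB] at h4
      have h5 : ∀ i ∈ Finset.range q,
          (a : ZMod p) ^ i * (a : ZMod p) ^ (q - 1 - i) = (a : ZMod p) ^ (q - 1) := by
        intro i hi
        rw [← pow_add]
        congr 1
        have := Finset.mem_range.mp hi
        omega
      rw [Finset.sum_congr rfl h5, Finset.sum_const, Finset.card_range, nsmul_eq_mul] at h4
      exact h4
    have hq0' : (q : ZMod p) ≠ 0 := by
      intro h
      have hpq : p ∣ q := (ZMod.natCast_eq_zero_iff q p).mp h
      rcases hq.eq_one_or_self_of_dvd p hpq with h1 | h1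
      · exact hp.one_lt.ne' h1
      · omega
    rw [hNp] at hsum
    exact mul_ne_zero hq0' (pow_ne_zero _ hA0) hsum.symm
  -- build the ring hom
  haveI : NeZero N := ⟨by omega⟩
  have hbco : Nat.Coprime b N := ((hcop.pow_right j).coprime_dvd_right hj).symm
  have hu : IsUnit ((m : ℤ) : ZMod N) := by
    have h1 : IsUnit ((m : ℕ) : ZMod N) := (ZMod.isUnit_iff_coprime m N).mpr hcop.symm
    simpa using h1
  set f : Zinv m →+* ZMod N :=
    IsLocalization.Away.lift (S := Zinv m) ((m : ℤ)) (g := Int.castRingHom (ZMod N)) hu with hfdef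
  have key : (s : Zinv m) * (algebraMap ℤ (Zinv m)) (b : ℤ) = (algebraMap ℤ (Zinv m)) q0.num := by
    ext
    push_cast [Zinv.coe_algebraMap]
    exact Rat.mul_den_eq_num q0
  have hfb : f (s : Zinv m) * ((b : ℕ) : ZMod N) = ((q0.num : ℤ) : ZMod N) := by
    have h1 := congrArg f key
    rw [map_mul, IsLocalization.Away.lift_eq, IsLocalization.Away.lift_eq] at h1
    simpa using h1
  have hfs : f (s : Zinv m) ^ q = 1 := by
    have hABN : ((a : ℤ) : ZMod N) ^ q = ((b : ℤ) : ZMod N) ^ q := by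
      have h0 : (((a : ℤ) ^ q - (b : ℤ) ^ q : ℤ) : ZMod N) = 0 :=
        (ZMod.intCast_zmod_eq_zero_iff_dvd _ N).mpr hdvd
      push_cast at h0 ⊢
      exact sub_eq_zero.mp h0
    have h2 : f (s : Zinv m) ^ q * ((b : ℕ) : ZMod N) ^ q = ((b : ℕ) : ZMod N) ^ q := by
      rw [← mul_pow, hfb, ← ha]
      exact_mod_cast hABN
    have hbu : IsUnit (((b : ℕ) : ZMod N) ^ q) :=
      ((ZMod.isUnit_iff_coprime b N).mpr hbco).pow q
    exact hbu.mul_right_cancel (h2.trans (one_mul _).symm)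
  refine ⟨N, ⟨hN0, hcop, f, ?_⟩, by omega⟩
  rcases hq.eq_one_or_self_of_dvd _ (orderOf_dvd_of_pow_eq_one hfs) with h | h
  · rw [h]; exact odd_one
  · rw [h]; exact hqodd
end

section
/- Let m ≥ 2 and let G_m be the subgroup of GL_2(ℤ[1/m]) consisting of matrices of the form [[m^k, r],[0,1]] with k ∈ ℤ, r ∈ ℤ[1/m]. For N coprime to m, let G_m(N) be the kernel of reduction modulo N on G_m. Then G_m/G_m(N) is isomorphic to the semidirect product (ℤ/Nℤ) ⋊ (ℤ/ord_m(N)ℤ), where the generator of ℤ/ord_m(N)ℤ acts on ℤ/Nℤ by multiplication by m; in particular |G_m/G_m(N)| = N · ord_m(N). -/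
namespace Stmt11Aux
variable {m N : ℕ}

lemma mQ_pos (hm : 2 ≤ m) : (0:ℚ) < m := by
  have : 0 < m := by omega
  exact_mod_cast this

lemma mQ_ne_one (hm : 2 ≤ m) : (m:ℚ) ≠ 1 := by
  have : m ≠ 1 := by omega
  exact_mod_cast this

lemma zpow_inj (hm : 2 ≤ m) : Function.Injective fun k : ℤ => (m:ℚ) ^ k :=
  zpow_right_injective₀ (mQ_pos hm) (mQ_ne_one hm)

/-- `1/m` as an element of `Zinv m`. -/
def minv (m : ℕ) : Zinv m := ⟨(m:ℚ)⁻¹, Subring.subset_closure rfl⟩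

lemma m_mul_minv (hm : 2 ≤ m) : ((m:ℕ) : Zinv m) * minv m = 1 := by
  apply Subtype.ext
  push_cast [minv]
  field_simp

/-- the unit `m` in `ZMod N`. -/
def um (hcop : Nat.Coprime N m) : (ZMod N)ˣ := ZMod.unitOfCoprime m hcop.symm

lemma um_coe (hcop : Nat.Coprime N m) : ((um hcop : (ZMod N)ˣ) : ZMod N) = (m : ZMod N) :=
  ZMod.coe_unitOfCoprime m hcop.symm

lemma ord_eq (hcop : Nat.Coprime N m) :
    orderOf (m : ZMod N) = orderOf (um (N := N) hcop) := by
  rw [← um_coe hcop, orderOf_units]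

lemma ord_pos (hN : 0 < N) (hcop : Nat.Coprime N m) : 0 < orderOf (m : ZMod N) := by
  haveI : NeZero N := ⟨hN.ne'⟩
  rw [ord_eq hcop]
  exact orderOf_pos _

/-- values of `f` at power elements. -/
lemma f_zpow (hm : 2 ≤ m) (hcop : Nat.Coprime N m) (f : Zinv m →+* ZMod N)
    (x : Zinv m) (k : ℤ) (hx : (x:ℚ) = (m:ℚ) ^ k) :
    f x = ((um hcop ^ k : (ZMod N)ˣ) : ZMod N) := by
  have hm0 : (m:ℚ) ≠ 0 := (mQ_pos hm).ne'
  cases k with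
  | ofNat n =>
    simp only [Int.ofNat_eq_coe, zpow_natCast] at hx ⊢
    have hx' : x = ((m:ℕ) : Zinv m) ^ n := by
      apply Subtype.ext
      push_cast
      rw [hx]
    rw [hx', map_pow, map_natCast, Units.val_pow_eq_pow_val, um_coe]
  | negSucc n =>
    have hx' : x * ((m:ℕ) : Zinv m) ^ (n+1) = 1 := by
      apply Subtype.ext
      push_cast
      rw [hx]
      rw [zpow_negSucc]
      rw [inv_mul_cancel₀ (by positivity)]
    have h1 : f x * (m : ZMod N) ^ (n+1) = 1 := by
      have := congrArg f hx'
      rwa [map_mul, map_pow, map_natCast, map_one] at this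
    have h2 : ((um hcop ^ (Int.negSucc n) : (ZMod N)ˣ) : ZMod N) * (m : ZMod N) ^ (n+1) = 1 := by
      rw [← um_coe hcop, ← Units.val_pow_eq_pow_val, ← Units.val_mul, ← zpow_natCast,
        ← zpow_add, Int.negSucc_eq]
      have : (-((n:ℤ)+1) + ((n:ℤ)+1)) = 0 := by ring
      push_cast
      rw [this, zpow_zero, Units.val_one]
    have h3 : IsUnit ((m : ZMod N) ^ (n+1)) := by
      rw [← um_coe hcop, ← Units.val_pow_eq_pow_val]; exact Units.isUnit _
    obtain ⟨c, hc⟩ := h3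
    rw [← hc] at h1 h2
    calc f x = f x * (c * c⁻¹ : (ZMod N)ˣ) := by rw [mul_inv_cancel]; simp
    _ = (f x * c) * ((c⁻¹ : (ZMod N)ˣ) : ZMod N) := by push_cast; ring
    _ = (((um hcop ^ (Int.negSucc n) : (ZMod N)ˣ) : ZMod N) * c) * ((c⁻¹ : (ZMod N)ˣ) : ZMod N) := by
        rw [h1, h2]
    _ = ((um hcop ^ (Int.negSucc n) : (ZMod N)ˣ) : ZMod N) * ((c * c⁻¹ : (ZMod N)ˣ) : ZMod N) := by
        push_cast; ring
    _ = _ := by rw [mul_inv_cancel]; simp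

lemma upow_mod (hN : 0 < N) (hcop : Nat.Coprime N m) (k : ℤ) :
    um (N := N) hcop ^ k = um hcop ^ ((k : ZMod (orderOf (m : ZMod N))).val) := by
  set d := orderOf (m : ZMod N) with hd
  haveI : NeZero d := ⟨(ord_pos hN hcop).ne'⟩
  have h1 : um hcop ^ (k - (((k : ZMod d).val : ℤ))) = 1 := by
    rw [← orderOf_dvd_iff_zpow_eq_one, ← ord_eq hcop, ← hd,
      ← ZMod.intCast_zmod_eq_zero_iff_dvd]
    push_cast
    rw [ZMod.natCast_rightInverse (k : ZMod d), sub_self]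
  calc um hcop ^ k = um hcop ^ ((((k : ZMod d).val : ℤ)) + (k - (((k : ZMod d).val : ℤ)))) := by
        ring_nf
  _ = um hcop ^ (((k : ZMod d).val : ℤ)) * um hcop ^ (k - (((k : ZMod d).val : ℤ))) := zpow_add _ _ _
  _ = _ := by rw [h1, mul_one, zpow_natCast]

lemma act_pow (act : Multiplicative (ZMod (orderOf (m : ZMod N))) →*
      MulAut (Multiplicative (ZMod N)))
    (hact : ∀ x : ZMod N,
      act (Multiplicative.ofAdd (1 : ZMod (orderOf (m : ZMod N))))
          (Multiplicative.ofAdd x) = Multiplicative.ofAdd ((m : ZMod N) * x))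
    (n : ℕ) (b : ZMod N) :
    act (Multiplicative.ofAdd ((n : ZMod (orderOf (m : ZMod N)))))
        (Multiplicative.ofAdd b) = Multiplicative.ofAdd ((m : ZMod N) ^ n * b) := by
  induction n generalizing b with
  | zero => simp
  | succ n ih =>
    have : ((n+1 : ℕ) : ZMod (orderOf (m : ZMod N))) = 1 + (n : ZMod (orderOf (m : ZMod N))) := by
      push_cast; ring
    rw [this, ofAdd_add, map_mul, MulAut.mul_apply, ih, hact, ← mul_assoc, pow_succ']

lemma act_apply (hd : orderOf (m : ZMod N) ≠ 0)
    (act : Multiplicative (ZMod (orderOf (m : ZMod N))) →*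
      MulAut (Multiplicative (ZMod N)))
    (hact : ∀ x : ZMod N,
      act (Multiplicative.ofAdd (1 : ZMod (orderOf (m : ZMod N))))
          (Multiplicative.ofAdd x) = Multiplicative.ofAdd ((m : ZMod N) * x))
    (c : ZMod (orderOf (m : ZMod N))) (b : ZMod N) :
    act (Multiplicative.ofAdd c) (Multiplicative.ofAdd b)
      = Multiplicative.ofAdd ((m : ZMod N) ^ c.val * b) := by
  haveI : NeZero (orderOf (m : ZMod N)) := ⟨hd⟩
  rw [← act_pow act hact c.val b, ZMod.natCast_rightInverse c]

end Stmt11Aux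

open Stmt11Aux in
theorem stmt_11 (m N : ℕ) (hm : 2 ≤ m) (hN : 0 < N) (hcop : Nat.Coprime N m)
    -- `G` is the subgroup of matrices `[[m^k, r], [0, 1]]`, `k ∈ ℤ`, `r ∈ ℤ[1/m]`
    (G : Subgroup (GL (Fin 2) (Zinv m)))
    (hG : (G : Set (GL (Fin 2) (Zinv m))) =
      {A : GL (Fin 2) (Zinv m) |
        (∃ k : ℤ, ((A.val 0 0 : Zinv m) : ℚ) = (m : ℚ) ^ k) ∧
        A.val 1 0 = 0 ∧ A.val 1 1 = 1})
    -- `f` is reduction modulo `N` (the unique ring homomorphism `ℤ[1/m] → ℤ/Nℤ`)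
    (f : Zinv m →+* ZMod N)
    -- `act` is the action of `ℤ/ord_m(N)ℤ` on `ℤ/Nℤ` by multiplication by `m`
    (act : Multiplicative (ZMod (orderOf (m : ZMod N))) →*
      MulAut (Multiplicative (ZMod N)))
    (hact : ∀ x : ZMod N,
      act (Multiplicative.ofAdd (1 : ZMod (orderOf (m : ZMod N))))
          (Multiplicative.ofAdd x) = Multiplicative.ofAdd ((m : ZMod N) * x)) :
    Nonempty ((G ⧸ ((Matrix.GeneralLinearGroup.map f).comp G.subtype).ker) ≃*
      (Multiplicative (ZMod N) ⋊[act] Multiplicative (ZMod (orderOf (m : ZMod N))))) ∧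
    Nat.card (G ⧸ ((Matrix.GeneralLinearGroup.map f).comp G.subtype).ker) =
      N * orderOf (m : ZMod N) := by
  classical
  haveI : NeZero N := ⟨hN.ne'⟩
  haveI hdnz : NeZero (orderOf (m : ZMod N)) := ⟨(ord_pos hN hcop).ne'⟩
  have hmem : ∀ A : G, (∃ k : ℤ, (((A : GL (Fin 2) (Zinv m)).val 0 0 : Zinv m) : ℚ) = (m : ℚ) ^ k) ∧
      (A : GL (Fin 2) (Zinv m)).val 1 0 = 0 ∧ (A : GL (Fin 2) (Zinv m)).val 1 1 = 1 := by
    intro A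
    have h := A.2
    rw [← SetLike.mem_coe, hG] at h
    exact h
  set kOf : G → ℤ := fun A => (hmem A).1.choose with hkOf
  have hk : ∀ A : G, (((A : GL (Fin 2) (Zinv m)).val 0 0 : Zinv m) : ℚ) = (m : ℚ) ^ (kOf A) :=
    fun A => (hmem A).1.choose_spec
  -- product entries
  have hmul00 : ∀ A B : G, ((A * B : G) : GL (Fin 2) (Zinv m)).val 0 0 =
      (A : GL (Fin 2) (Zinv m)).val 0 0 * (B : GL (Fin 2) (Zinv m)).val 0 0 := by
    intro A B
    rw [Subgroup.coe_mul, Units.val_mul, Matrix.mul_apply, Fin.sum_univ_two, (hmem B).2.1]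
    ring
  have hmul01 : ∀ A B : G, ((A * B : G) : GL (Fin 2) (Zinv m)).val 0 1 =
      (A : GL (Fin 2) (Zinv m)).val 0 0 * (B : GL (Fin 2) (Zinv m)).val 0 1 +
        (A : GL (Fin 2) (Zinv m)).val 0 1 := by
    intro A B
    rw [Subgroup.coe_mul, Units.val_mul, Matrix.mul_apply, Fin.sum_univ_two, (hmem B).2.2]
    ring
  have hkmul : ∀ A B : G, kOf (A * B) = kOf A + kOf B := by
    intro A B
    apply zpow_inj hm
    show (m:ℚ) ^ kOf (A*B) = (m:ℚ) ^ (kOf A + kOf B)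
    rw [← hk (A*B), hmul00 A B, zpow_add₀ (mQ_pos hm).ne']
    push_cast
    rw [hk A, hk B]
  -- the homomorphism to the semidirect product
  set ψ : G →* (Multiplicative (ZMod N) ⋊[act] Multiplicative (ZMod (orderOf (m : ZMod N)))) :=
    MonoidHom.mk' (fun A => ⟨Multiplicative.ofAdd (f ((A : GL (Fin 2) (Zinv m)).val 0 1)),
      Multiplicative.ofAdd ((kOf A : ZMod (orderOf (m : ZMod N))))⟩) (by
      intro A B
      have hfA00 : f ((A : GL (Fin 2) (Zinv m)).val 0 0) = ((um hcop ^ kOf A : (ZMod N)ˣ) : ZMod N) :=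
        f_zpow hm hcop f _ _ (hk A)
      ext
      · show f (((A * B : G) : GL (Fin 2) (Zinv m)).val 0 1) =
          (f ((A : GL (Fin 2) (Zinv m)).val 0 1)) +
            Multiplicative.toAdd (act (Multiplicative.ofAdd ((kOf A : ZMod (orderOf (m : ZMod N)))))
              (Multiplicative.ofAdd (f ((B : GL (Fin 2) (Zinv m)).val 0 1))))
        rw [act_apply hdnz.1 act hact]
        show f (((A * B : G) : GL (Fin 2) (Zinv m)).val 0 1) =
          f ((A : GL (Fin 2) (Zinv m)).val 0 1) +
            (m : ZMod N) ^ ((kOf A : ZMod (orderOf (m : ZMod N)))).val * f ((B : GL (Fin 2) (Zinv m)).val 0 1)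
        rw [hmul01 A B, map_add, map_mul, hfA00, upow_mod hN hcop,
          Units.val_pow_eq_pow_val, um_coe]
        ring
      · show ((kOf (A*B) : ZMod (orderOf (m : ZMod N)))) =
          (kOf A : ZMod (orderOf (m : ZMod N))) + (kOf B : ZMod (orderOf (m : ZMod N)))
        rw [hkmul A B]
        push_cast
        ring)
  -- kernel identification
  have hker : ((Matrix.GeneralLinearGroup.map f).comp G.subtype).ker = ψ.ker := by
    ext A
    have hfA00 : f ((A : GL (Fin 2) (Zinv m)).val 0 0) = ((um hcop ^ kOf A : (ZMod N)ˣ) : ZMod N) :=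
      f_zpow hm hcop f _ _ (hk A)
    have hu1 : ((um hcop ^ kOf A : (ZMod N)ˣ) : ZMod N) = 1 ↔
        ((kOf A : ZMod (orderOf (m : ZMod N)))) = 0 := by
      rw [Units.val_eq_one]
      rw [← orderOf_dvd_iff_zpow_eq_one, ← ord_eq hcop,
        ← ZMod.intCast_zmod_eq_zero_iff_dvd]
    constructor
    · intro h
      rw [MonoidHom.mem_ker] at h ⊢
      have h' : ∀ i j, f ((A : GL (Fin 2) (Zinv m)).val i j) = (1 : Matrix (Fin 2) (Fin 2) (ZMod N)) i j := by
        intro i j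
        rw [← Matrix.GeneralLinearGroup.map_apply f i j]
        rw [show (Matrix.GeneralLinearGroup.map f) (A : GL (Fin 2) (Zinv m)) =
          ((Matrix.GeneralLinearGroup.map f).comp G.subtype) A from rfl, h]
        rfl
      have h01 : f ((A : GL (Fin 2) (Zinv m)).val 0 1) = 0 := by
        have := h' 0 1; rwa [Matrix.one_apply_ne (by decide)] at this
      have h00 : f ((A : GL (Fin 2) (Zinv m)).val 0 0) = 1 := by
        have := h' 0 0; rwa [Matrix.one_apply_eq] at this
      apply SemidirectProduct.ext
      · show Multiplicative.ofAdd (f ((A : GL (Fin 2) (Zinv m)).val 0 1)) = 1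
        rw [h01]; rfl
      · show Multiplicative.ofAdd ((kOf A : ZMod (orderOf (m : ZMod N)))) = 1
        rw [hfA00] at h00
        rw [hu1.1 h00]; rfl
    · intro h
      rw [MonoidHom.mem_ker] at h ⊢
      have h01 : f ((A : GL (Fin 2) (Zinv m)).val 0 1) = 0 := by
        have := congrArg SemidirectProduct.left h
        simpa [ψ] using this
      have hk0 : ((kOf A : ZMod (orderOf (m : ZMod N)))) = 0 := by
        have := congrArg SemidirectProduct.right h
        simpa [ψ] using this
      apply Units.ext
      show Matrix.map ((A : GL (Fin 2) (Zinv m)).val) f = 1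
      rw [← Matrix.ext_iff]
      simp only [Fin.forall_fin_two, Matrix.map_apply]
      refine ⟨⟨?_, ?_⟩, ?_, ?_⟩
      · rw [hfA00, hu1.2 hk0, Matrix.one_apply_eq]
      · rw [h01, Matrix.one_apply_ne (by decide)]
      · rw [(hmem A).2.1, map_zero, Matrix.one_apply_ne (by decide)]
      · rw [(hmem A).2.2, map_one, Matrix.one_apply_eq]
  -- surjectivity
  have hsurj : Function.Surjective ψ := by
    rintro ⟨a, c⟩
    set az : ZMod N := Multiplicative.toAdd a with haz
    set cz : ZMod (orderOf (m : ZMod N)) := Multiplicative.toAdd c with hcz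
    set r : Zinv m := ((az.val : ℕ) : Zinv m) with hr
    set M : Matrix (Fin 2) (Fin 2) (Zinv m) :=
      !![((m:ℕ) : Zinv m) ^ cz.val, r; 0, 1] with hM
    set Mi : Matrix (Fin 2) (Fin 2) (Zinv m) :=
      !![(minv m) ^ cz.val, -((minv m) ^ cz.val * r); 0, 1] with hMi
    have key : ((m:ℕ) : Zinv m) ^ cz.val * (minv m) ^ cz.val = 1 := by
      rw [← mul_pow, m_mul_minv hm, one_pow]
    have h1 : M * Mi = 1 := by
      rw [hM, hMi, Matrix.mul_fin_two, Matrix.one_fin_two,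
        show ((m:ℕ) : Zinv m) ^ cz.val * (minv m ^ cz.val) + r * 0 = 1 by linear_combination key,
        show ((m:ℕ) : Zinv m) ^ cz.val * -(minv m ^ cz.val * r) + r * 1 = 0 by
          linear_combination (-(r : Zinv m)) * key,
        show (0 : Zinv m) * (minv m ^ cz.val) + 1 * 0 = 0 by ring,
        show (0 : Zinv m) * -(minv m ^ cz.val * r) + 1 * 1 = 1 by ring]
    have h2 : Mi * M = 1 := by
      rw [hM, hMi, Matrix.mul_fin_two, Matrix.one_fin_two,
        show (minv m ^ cz.val) * ((m:ℕ) : Zinv m) ^ cz.val + -(minv m ^ cz.val * r) * 0 = 1 by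
          linear_combination key,
        show (minv m ^ cz.val) * r + -(minv m ^ cz.val * r) * 1 = 0 by ring,
        show (0 : Zinv m) * (((m:ℕ) : Zinv m) ^ cz.val) + 1 * 0 = 0 by ring,
        show (0 : Zinv m) * r + 1 * 1 = 1 by ring]
    set u : GL (Fin 2) (Zinv m) := ⟨M, Mi, h1, h2⟩ with hu
    have hu00 : u.val 0 0 = ((m:ℕ) : Zinv m) ^ cz.val := by rw [hu]; simp [hM]
    have hu01 : u.val 0 1 = r := by rw [hu]; simp [hM]
    have hu10 : u.val 1 0 = 0 := by rw [hu]; simp [hM]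
    have hu11 : u.val 1 1 = 1 := by rw [hu]; simp [hM]
    have hpow : ((u.val 0 0 : Zinv m) : ℚ) = (m : ℚ) ^ ((cz.val : ℤ)) := by
      rw [hu00]
      push_cast
      rw [zpow_natCast]
    have huG : u ∈ G := by
      rw [← SetLike.mem_coe, hG]
      exact ⟨⟨(cz.val : ℤ), hpow⟩, hu10, hu11⟩
    refine ⟨⟨u, huG⟩, ?_⟩
    have hkval : kOf ⟨u, huG⟩ = (cz.val : ℤ) := by
      apply zpow_inj hm
      show (m:ℚ) ^ kOf ⟨u, huG⟩ = (m:ℚ) ^ ((cz.val : ℤ))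
      rw [← hk ⟨u, huG⟩]
      exact hpow
    apply SemidirectProduct.ext
    · show Multiplicative.ofAdd (f ((u : GL (Fin 2) (Zinv m)).val 0 1)) = a
      rw [hu01, hr, map_natCast, ZMod.natCast_rightInverse az]
      rfl
    · show Multiplicative.ofAdd ((kOf ⟨u, huG⟩ : ZMod (orderOf (m : ZMod N)))) = c
      rw [hkval]
      push_cast
      rw [ZMod.natCast_rightInverse cz]
      rfl
  -- conclusion
  have e : (G ⧸ ((Matrix.GeneralLinearGroup.map f).comp G.subtype).ker) ≃*
      (Multiplicative (ZMod N) ⋊[act] Multiplicative (ZMod (orderOf (m : ZMod N)))) :=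
    (QuotientGroup.quotientMulEquivOfEq hker).trans
      (QuotientGroup.quotientKerEquivOfSurjective ψ hsurj)
  refine ⟨⟨e⟩, ?_⟩
  have e2 : (Multiplicative (ZMod N) ⋊[act] Multiplicative (ZMod (orderOf (m : ZMod N)))) ≃
      (ZMod N) × (ZMod (orderOf (m : ZMod N))) :=
    ⟨fun x => (Multiplicative.toAdd x.left, Multiplicative.toAdd x.right),
     fun p => ⟨Multiplicative.ofAdd p.1, Multiplicative.ofAdd p.2⟩,
     fun x => by cases x; rfl, fun p => rfl⟩
  rw [Nat.card_congr e.toEquiv, Nat.card_congr e2, Nat.card_prod, Nat.card_zmod, Nat.card_zmod]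
end

section
/- Let A be a subring of ℚ and let g be an element of the group U_n(A) of upper unitriangular n×n matrices over A. Then there exists a unique group homomorphism α : (A, +) → U_n(A) with α(1) = g, given by α(r) = (1 + X)^r = ∑_{k=0}^{n-1} C(r,k) X^k where g = 1 + X with X strictly upper triangular. -/
open Finset

namespace Stmt14Aux

lemma modeq_prod {ι : Type*} (s : Finset ι) (f g : ι → ℤ) (n : ℤ)
    (h : ∀ i ∈ s, f i ≡ g i [ZMOD n]) : (∏ i ∈ s, f i) ≡ (∏ i ∈ s, g i) [ZMOD n] := by
  classical
  induction s using Finset.induction with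
  | empty => simp [Int.ModEq.refl]
  | insert a s hx ih =>
    rw [Finset.prod_insert hx, Finset.prod_insert hx]
    exact (h a (mem_insert_self a s)).mul (ih fun i hi => h i (mem_insert_of_mem hi))

lemma vpfact_le (p k : ℕ) (pp : p.Prime) : (k.factorial).factorization p ≤ k := by
  haveI : Fact p.Prime := ⟨pp⟩
  have h := sub_one_mul_padicValNat_factorial (p := p) k
  rw [Nat.factorization_def _ pp]
  calc padicValNat p k.factorial ≤ (p - 1) * padicValNat p k.factorial :=
        Nat.le_mul_of_pos_left _ (Nat.sub_pos_of_lt pp.one_lt)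
    _ = k - (Nat.digits p k).sum := h
    _ ≤ k := Nat.sub_le _ _

lemma fact_dvd_desc_int (m : ℤ) (k : ℕ) (hm : (k : ℤ) ≤ m) :
    (k.factorial : ℤ) ∣ ∏ i ∈ range k, (m - i) := by
  lift m to ℕ using le_trans (by positivity) hm
  have hm' : k ≤ m := by exact_mod_cast hm
  have : (∏ i ∈ range k, ((m : ℤ) - i)) = ((m.descFactorial k : ℕ) : ℤ) := by
    rw [Nat.descFactorial_eq_prod_range]
    push_cast [Nat.cast_prod]
    refine Finset.prod_congr rfl fun i hi => ?_
    have : i ≤ m := le_of_lt (lt_of_lt_of_le (mem_range.mp hi) hm')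
    push_cast [Nat.cast_sub this]
    ring
  rw [this]
  exact_mod_cast Int.natCast_dvd_natCast.mpr (Nat.factorial_dvd_descFactorial m k)

lemma key_dvd (a b : ℤ) (k : ℕ) :
    (k.factorial : ℤ) ∣ (∏ i ∈ range k, (a - i * b)) * b ^ k := by
  set P : ℤ := (∏ i ∈ range k, (a - i * b)) * b ^ k with hP
  rcases eq_or_ne P 0 with h0 | h0
  · rw [h0]; exact dvd_zero _
  rw [← Int.natAbs_dvd_natAbs]
  simp only [Int.natAbs_natCast]
  rw [← Nat.factorization_le_iff_dvd k.factorial_ne_zero (Int.natAbs_ne_zero.mpr h0)]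
  rw [Finsupp.le_def]
  intro p
  by_cases pp : p.Prime
  swap
  · simp [Nat.factorization_eq_zero_of_not_prime _ pp]
  set t := (k.factorial).factorization p with ht
  rw [← Nat.Prime.pow_dvd_iff_le_factorization pp (Int.natAbs_ne_zero.mpr h0)]
  rw [← Int.natAbs_natCast (p ^ t), Int.natAbs_dvd_natAbs]
  push_cast
  by_cases hpb : (p : ℤ) ∣ b
  · refine dvd_mul_of_dvd_right ?_ _
    exact (pow_dvd_pow (p : ℤ) (vpfact_le p k pp)).trans (pow_dvd_pow_of_dvd hpb k)
  · have hprime : Prime (p : ℤ) := by rw [Int.prime_iff_natAbs_prime]; simpa using pp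
    have hcop : IsCoprime ((p : ℤ) ^ t) b := ((hprime.coprime_iff_not_dvd).mpr hpb).pow_left
    obtain ⟨u, v, huv⟩ := hcop
    set m : ℤ := v * a + (p : ℤ) ^ t * (k + (v * a).natAbs) with hm
    have hmk : (k : ℤ) ≤ m := by
      have h1 : (1 : ℤ) ≤ (p : ℤ) ^ t := one_le_pow₀ (by exact_mod_cast pp.one_lt.le)
      have h2 : (k : ℤ) + (v * a).natAbs ≤ (p:ℤ) ^ t * (k + (v * a).natAbs) :=
        le_mul_of_one_le_left (by positivity) h1
      have h3 : -(v * a) ≤ ((v * a).natAbs : ℤ) := by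
        rw [← Int.natAbs_neg]; exact Int.le_natAbs
      simp only [hm]; linarith
    have hmod : ∀ i ∈ range k, (a - (i:ℤ) * b) ≡ b * (m - i) [ZMOD (p:ℤ)^t] := by
      intro i _
      have hd : ((p:ℤ)^t) ∣ b * m - a := by
        have h1 : b * m - a = (b * v - 1) * a + b * ((p:ℤ)^t * (k + (v*a).natAbs)) := by
          simp only [hm]; ring
        have h2 : b * v - 1 = -(u * (p:ℤ)^t) := by linarith [huv]
        rw [h1, h2]
        exact dvd_add ⟨-(u * a), by ring⟩ ⟨b * ((k : ℤ) + (v*a).natAbs), by ring⟩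
      have heq : (a - i * b) - b * (m - i) = -(b * m - a) := by ring
      refine (Int.modEq_iff_dvd.mpr ?_).symm
      rw [heq]
      exact dvd_neg.mpr hd
    have hprodmod := modeq_prod (range k) _ _ ((p:ℤ)^t) hmod
    have hsplit : (∏ i ∈ range k, (b * (m - (i:ℤ)))) = b ^ k * ∏ i ∈ range k, (m - (i:ℤ)) := by
      rw [Finset.prod_mul_distrib, Finset.prod_const, Finset.card_range]
    have hfd : ((p:ℤ)^t) ∣ ∏ i ∈ range k, (m - (i:ℤ)) := by
      refine dvd_trans ?_ (fact_dvd_desc_int m k hmk)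
      exact_mod_cast Int.natCast_dvd_natCast.mpr (Nat.ordProj_dvd k.factorial p)
    have hdvd2 : ((p:ℤ)^t) ∣ ∏ i ∈ range k, (a - (i:ℤ) * b) := by
      have h3 : ((p:ℤ)^t) ∣ ∏ i ∈ range k, (b * (m - (i:ℤ))) := by
        rw [hsplit]; exact Dvd.dvd.mul_left hfd _
      have h4 := Int.ModEq.dvd hprodmod
      have := dvd_sub h3 h4
      simpa using this
    exact dvd_mul_of_dvd_left hdvd2 _

noncomputable def cc (r : ℚ) (k : ℕ) : ℚ :=
  (∏ i ∈ range k, (r - i)) / (k.factorial : ℚ)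

lemma num_eq (r : ℚ) : (r.num : ℚ) = r * (r.den : ℚ) := by
  have hb0 : ((r.den : ℚ)) ≠ 0 := by exact_mod_cast r.den_ne_zero
  have h := Rat.num_div_den r
  rw [div_eq_iff hb0] at h
  rw [h]

lemma inv_den_mem (A : Subring ℚ) (r : ℚ) (hr : r ∈ A) : ((r.den : ℚ))⁻¹ ∈ A := by
  have hg : Int.gcd r.num (r.den : ℤ) = 1 := by
    simpa [Int.gcd] using r.reduced
  have hbez := Int.gcd_eq_gcd_ab r.num (r.den : ℤ)
  rw [hg] at hbez
  have hbezQ := congrArg (fun z : ℤ => (z : ℚ)) hbez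
  push_cast at hbezQ
  have hb0 : ((r.den : ℚ)) ≠ 0 := by exact_mod_cast r.den_ne_zero
  have : ((r.den : ℚ))⁻¹ =
      (Int.gcdA r.num (r.den : ℤ) : ℚ) * r + (Int.gcdB r.num (r.den : ℤ) : ℚ) := by
    rw [inv_eq_one_div, div_eq_iff hb0]
    linear_combination hbezQ + (Int.gcdA r.num (r.den : ℤ) : ℚ) * num_eq r
  rw [this]
  exact A.add_mem (A.mul_mem (intCast_mem A _) hr) (intCast_mem A _)

lemma cc_mem (A : Subring ℚ) (r : ℚ) (hr : r ∈ A) (k : ℕ) : cc r k ∈ A := by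
  obtain ⟨c, hc⟩ := key_dvd r.num (r.den : ℤ) k
  have hb0 : ((r.den : ℚ)) ≠ 0 := by exact_mod_cast r.den_ne_zero
  have hf0 : ((k.factorial : ℚ)) ≠ 0 := by exact_mod_cast k.factorial_ne_zero
  have hprod : (∏ i ∈ range k, ((r.num : ℚ) - i * r.den))
      = (∏ i ∈ range k, (r - i)) * (r.den : ℚ) ^ k := by
    rw [show (∏ i ∈ range k, (r - (i:ℚ))) * ((r.den:ℚ)) ^ k
        = ∏ i ∈ range k, ((r - (i:ℚ)) * (r.den:ℚ)) by
      rw [Finset.prod_mul_distrib, Finset.prod_const, Finset.card_range]]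
    refine Finset.prod_congr rfl fun i _ => ?_
    rw [num_eq r]; ring
  have hcQ := congrArg (fun z : ℤ => (z : ℚ)) hc
  push_cast at hcQ
  rw [hprod] at hcQ
  have hkey : cc r k = (c : ℚ) * (((r.den : ℚ))⁻¹) ^ (2 * k) := by
    have hd : (r.den:ℚ)^(2*k) ≠ 0 := pow_ne_zero _ hb0
    rw [cc, inv_pow, div_eq_iff hf0, ← div_eq_mul_inv, div_mul_eq_mul_div, eq_div_iff hd]
    linear_combination hcQ
  rw [hkey]
  exact A.mul_mem (intCast_mem A _) (A.pow_mem (inv_den_mem A r hr) _)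

lemma desc_smeval (r : ℚ) (k : ℕ) :
    Polynomial.smeval (descPochhammer ℤ k) r = ∏ i ∈ range k, (r - i) := by
  induction k with
  | zero => simp [descPochhammer_zero, Polynomial.smeval_one]
  | succ k ih =>
    rw [descPochhammer_succ_right, Polynomial.smeval_mul, ih, prod_range_succ]
    congr 1
    simp [Polynomial.smeval_sub, Polynomial.smeval_X, Polynomial.smeval_natCast]

lemma cc_eq_choose (r : ℚ) (k : ℕ) : cc r k = Ring.choose r k := by
  have h := Ring.descPochhammer_eq_factorial_smul_choose (R := ℚ) r k
  rw [desc_smeval] at h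
  rw [cc, h, nsmul_eq_mul]
  field_simp

lemma cc_add (x y : ℚ) (k : ℕ) :
    cc (x + y) k = ∑ ij ∈ Finset.HasAntidiagonal.antidiagonal k, cc x ij.1 * cc y ij.2 := by
  simp only [cc_eq_choose]
  exact Ring.add_choose_eq k (Commute.all x y)

lemma cc_zero' (r : ℚ) : cc r 0 = 1 := by simp [cc]

lemma cc_zero_succ (k : ℕ) : cc 0 (k + 1) = 0 := by
  rw [cc]
  rw [Finset.prod_eq_zero (Finset.mem_range.mpr (Nat.succ_pos k)) (by norm_num)]
  simp

lemma cc_one_one : cc 1 1 = 1 := by simp [cc]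

lemma cc_one_ge_two (k : ℕ) : cc 1 (k + 2) = 0 := by
  rw [cc]
  rw [Finset.prod_eq_zero (Finset.mem_range.mpr (by omega : 1 < k + 2)) (by norm_num)]
  simp

section Mat
variable (n : ℕ) (X : Matrix (Fin n) (Fin n) ℚ)
  (hXtri : ∀ i j : Fin n, j ≤ i → X i j = 0)
include hXtri

lemma Xpow_entry : ∀ (k : ℕ) (i j : Fin n), (j : ℕ) < (i : ℕ) + k → (X ^ k) i j = 0 := by
  intro k
  induction k with
  | zero =>
    intro i j hij
    simp only [pow_zero]
    have hne : i ≠ j := fun h => by subst h; omega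
    exact Matrix.one_apply_ne hne
  | succ k ih =>
    intro i j hij
    rw [pow_succ, Matrix.mul_apply]
    refine Finset.sum_eq_zero fun l _ => ?_
    by_cases hl : (l : ℕ) < (i : ℕ) + k
    · rw [ih i l hl, zero_mul]
    · have : (j : ℕ) ≤ (l : ℕ) := by omega
      rw [hXtri l j (by exact_mod_cast this), mul_zero]

lemma Xpow_hi (k : ℕ) (hk : n ≤ k) : X ^ k = 0 := by
  ext i j
  rw [Xpow_entry n X hXtri k i j (by have := j.isLt; omega), Matrix.zero_apply]

lemma f_mul (r s : ℚ) :
    (∑ k ∈ range n, cc r k • X ^ k) * (∑ k ∈ range n, cc s k • X ^ k)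
      = ∑ k ∈ range n, cc (r + s) k • X ^ k := by
  rw [Finset.sum_mul_sum]
  have step1 : ∀ k ∈ range n, ∀ l ∈ range n,
      (cc r k • X ^ k) * (cc s l • X ^ l) = (cc r k * cc s l) • X ^ (k + l) := by
    intro k _ l _
    rw [smul_mul_smul_comm, pow_add]
  rw [Finset.sum_congr rfl fun k hk => Finset.sum_congr rfl fun l hl => step1 k hk l hl]
  rw [← Finset.sum_product']
  set t : ℕ × ℕ → Matrix (Fin n) (Fin n) ℚ :=
    fun p => (cc r p.1 * cc s p.2) • X ^ (p.1 + p.2) with ht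
  set U : Finset (ℕ × ℕ) := (range n ×ˢ range n).filter (fun p => p.1 + p.2 < n) with hU
  have hsub : (∑ p ∈ range n ×ˢ range n, t p) = ∑ p ∈ U, t p := by
    refine (Finset.sum_subset (Finset.filter_subset _ _) fun p hp hpU => ?_).symm
    have : n ≤ p.1 + p.2 := by
      by_contra h
      exact hpU (Finset.mem_filter.mpr ⟨hp, by omega⟩)
    simp only [ht]
    rw [Xpow_hi n X hXtri _ this, smul_zero]
  rw [hsub]
  have hbi : U = (range n).biUnion (fun m => Finset.HasAntidiagonal.antidiagonal m) := by
    ext p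
    simp only [hU, Finset.mem_filter, Finset.mem_product, Finset.mem_range,
      Finset.mem_biUnion, Finset.HasAntidiagonal.mem_antidiagonal]
    constructor
    · rintro ⟨⟨h1, h2⟩, h3⟩; exact ⟨p.1 + p.2, h3, rfl⟩
    · rintro ⟨m, hm, rfl⟩; omega
  rw [hbi, Finset.sum_biUnion]
  · refine Finset.sum_congr rfl fun m hm => ?_
    rw [cc_add, Finset.sum_smul]
    refine Finset.sum_congr rfl fun p hp => ?_
    simp only [ht]
    rw [Finset.HasAntidiagonal.mem_antidiagonal.mp hp]
  · intro a ha b hb hab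
    simp only [Finset.disjoint_left, Finset.HasAntidiagonal.mem_antidiagonal]
    intro p h1 h2
    exact hab (h1 ▸ h2 ▸ rfl)

lemma f_zero : (∑ k ∈ range n, cc 0 k • X ^ k) = 1 := by
  rcases Nat.eq_zero_or_pos n with hn | hn
  · subst hn
    ext i j
    exact i.elim0
  · rw [Finset.sum_eq_single 0]
    · simp [cc_zero']
    · intro k hk hk0
      obtain ⟨k', rfl⟩ := Nat.exists_eq_succ_of_ne_zero hk0
      rw [cc_zero_succ, zero_smul]
    · intro h
      exact absurd (Finset.mem_range.mpr hn) h

lemma f_one : (∑ k ∈ range n, cc 1 k • X ^ k) = 1 + X := by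
  have hXz := fun (i j : Fin n) => hXtri i j
  rcases Nat.lt_or_ge n 2 with hn | hn
  · interval_cases n
    · ext i j; exact i.elim0
    · have hX0 : X = 0 := by
        ext i j
        have : j ≤ i := by omega
        rw [hXtri i j this, Matrix.zero_apply]
      rw [hX0]
      simp [cc_zero']
  · have hsub : ({0, 1} : Finset ℕ) ⊆ range n := by
      intro x hx
      simp only [Finset.mem_insert, Finset.mem_singleton] at hx
      rcases hx with rfl | rfl <;> simp [Finset.mem_range] <;> omega
    rw [← Finset.sum_subset hsub]
    · rw [Finset.sum_insert (by norm_num), Finset.sum_singleton]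
      simp [cc_zero', cc_one_one]
    · intro k hk hk2
      simp only [Finset.mem_insert, Finset.mem_singleton] at hk2
      have : ∃ k', k = k' + 2 := by
        refine ⟨k - 2, ?_⟩
        omega
      obtain ⟨k', rfl⟩ := this
      rw [cc_one_ge_two, zero_smul]

end Mat

end Stmt14Aux

theorem stmt_14 (n : ℕ) (A : Subring ℚ) (X : Matrix (Fin n) (Fin n) ℚ)
    (hXA : ∀ i j : Fin n, X i j ∈ A) (hXtri : ∀ i j : Fin n, j ≤ i → X i j = 0)
    (g : (Matrix (Fin n) (Fin n) ℚ)ˣ) (hg : g.val = 1 + X) :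
    ∃! α : Multiplicative A →* (Matrix (Fin n) (Fin n) ℚ)ˣ,
      α (Multiplicative.ofAdd 1) = g ∧
      (∀ r : A, ∀ i j : Fin n,
        (α (Multiplicative.ofAdd r)).val i j ∈ A ∧
        (j < i → (α (Multiplicative.ofAdd r)).val i j = 0) ∧
        (i = j → (α (Multiplicative.ofAdd r)).val i j = 1)) ∧
      (∀ r : A, (α (Multiplicative.ofAdd r)).val =
        ∑ k ∈ Finset.range n,
          ((∏ i ∈ Finset.range k, ((r : ℚ) - (i : ℚ))) / (k.factorial : ℚ)) • X ^ k) := by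
  classical
  set f : ℚ → Matrix (Fin n) (Fin n) ℚ :=
    fun r => ∑ k ∈ range n, Stmt14Aux.cc r k • X ^ k with hf
  have hmul : ∀ r s : ℚ, f r * f s = f (r + s) := fun r s =>
    Stmt14Aux.f_mul n X hXtri r s
  have hzero : f 0 = 1 := Stmt14Aux.f_zero n X hXtri
  have hone : f 1 = 1 + X := Stmt14Aux.f_one n X hXtri
  -- the units
  have hinv : ∀ r : ℚ, f r * f (-r) = 1 := by
    intro r
    rw [hmul, add_neg_cancel, hzero]
  set u : ℚ → (Matrix (Fin n) (Fin n) ℚ)ˣ := fun r =>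
    ⟨f r, f (-r), hinv r, by rw [hmul, neg_add_cancel, hzero]⟩ with hu
  set α : Multiplicative A →* (Matrix (Fin n) (Fin n) ℚ)ˣ :=
    MonoidHom.mk' (fun m => u ((Multiplicative.toAdd m : A) : ℚ)) (by
      intro x y
      refine Units.ext ?_
      show f _ = (f _) * (f _)
      rw [hmul]
      congr 1) with hα
  have hαval : ∀ r : A, (α (Multiplicative.ofAdd r)).val = f (r : ℚ) := fun r => rfl
  have hXpow_mem : ∀ (k : ℕ) (i j : Fin n), (X ^ k) i j ∈ A := by
    intro k
    induction k with
    | zero =>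
      intro i j
      rw [pow_zero, Matrix.one_apply]
      split
      · exact one_mem A
      · exact zero_mem A
    | succ k ih =>
      intro i j
      rw [pow_succ, Matrix.mul_apply]
      exact Subring.sum_mem _ fun l _ => A.mul_mem (ih i l) (hXA l j)
  refine ⟨α, ⟨?_, ?_, ?_⟩, ?_⟩
  · refine Units.ext ?_
    rw [hαval, hg]
    push_cast
    exact hone
  · intro r i j
    rw [hαval]
    simp only [hf, Matrix.sum_apply, Matrix.smul_apply, smul_eq_mul]
    refine ⟨?_, ?_, ?_⟩
    · exact Subring.sum_mem _ fun k _ =>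
        A.mul_mem (Stmt14Aux.cc_mem A _ r.2 k) (hXpow_mem k i j)
    · intro hji
      refine Finset.sum_eq_zero fun k _ => ?_
      rw [Stmt14Aux.Xpow_entry n X hXtri k i j (by
        have : (j : ℕ) < (i : ℕ) := hji
        omega), mul_zero]
    · intro hij
      subst hij
      have hn0 : 0 < n := i.pos
      rw [Finset.sum_eq_single 0]
      · rw [pow_zero, Matrix.one_apply_eq, Stmt14Aux.cc_zero', one_mul]
      · intro k hk hk0
        rw [Stmt14Aux.Xpow_entry n X hXtri k i i (by omega), mul_zero]
      · intro h
        exact absurd (Finset.mem_range.mpr hn0) h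
  · intro r
    rw [hαval]
    rfl
  · intro β hβ
    obtain ⟨hb1, hb2, hb3⟩ := hβ
    refine MonoidHom.ext fun x => ?_
    have hx : Multiplicative.ofAdd (Multiplicative.toAdd x) = x := rfl
    refine Units.ext ?_
    rw [← hx, hb3, hαval]
    rfl
end

section
/- In a torsion-free nilpotent group N, for every integer k ≥ 1 the map x ↦ x^k is injective. -/
/-- A monoid is torsion-free if no nontrivial elements have finite order
(the definition of `Monoid.IsTorsionFree` in the older Mathlib, since removed). -/
def Monoid.IsTorsionFree (G : Type*) [Monoid G] : Prop :=
  ∀ g : G, g ≠ 1 → ¬IsOfFinOrder g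

open Subgroup QuotientGroup

/-- Key commutator computation: if `z * g * z⁻¹ = c * g` with `c` central, then
`z ^ n * g * (z ^ n)⁻¹ = c ^ n * g`. -/
private lemma pow_conj_eq {G : Type*} [Group G] {z g c : G}
    (hc : c ∈ Subgroup.center G) (h : z * g * z⁻¹ = c * g) (n : ℕ) :
    z ^ n * g * (z ^ n)⁻¹ = c ^ n * g := by
  induction n with
  | zero => simp
  | succ n ih =>
    have hcn : c ^ n * z = z * c ^ n := ((Subgroup.pow_mem _ hc n).comm z)
    calc z ^ (n + 1) * g * (z ^ (n + 1))⁻¹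
        = z * (z ^ n * g * (z ^ n)⁻¹) * z⁻¹ := by rw [pow_succ']; group
      _ = z * (c ^ n * g) * z⁻¹ := by rw [ih]
      _ = c ^ n * (z * g * z⁻¹) := by rw [← mul_assoc, ← mul_assoc, ← hcn]; group
      _ = c ^ n * (c * g) := by rw [h]
      _ = c ^ (n + 1) * g := by rw [pow_succ, ← hc.comm (c ^ n)]; group

/-- If `z^m` is central and all commutators of `z` are central, then each such
commutator has `m`-th power one. -/
private lemma comm_pow_eq_one {G : Type*} [Group G] {z : G} {m : ℕ}
    (hzk : z ^ m ∈ Subgroup.center G)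
    (hz2 : ∀ g : G, z * g * z⁻¹ * g⁻¹ ∈ Subgroup.center G) (g : G) :
    (z * g * z⁻¹ * g⁻¹) ^ m = 1 := by
  set c := z * g * z⁻¹ * g⁻¹ with hcdef
  have h : z * g * z⁻¹ = c * g := by rw [hcdef]; group
  have hm := pow_conj_eq (hz2 g) h m
  have hcomm : z ^ m * g * (z ^ m)⁻¹ = g := by
    rw [hzk.comm g]; group
  rw [hcomm] at hm
  have h2 : c ^ m * g * g⁻¹ = g * g⁻¹ := by rw [← hm]
  simpa using h2

/-- If every central torsion element (exponent `m`) is trivial, then every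
torsion element of the center of the quotient by the center is trivial. -/
private lemma center_quotient_torsion_trivial {G : Type*} [Group G]
    (hkill : ∀ c ∈ Subgroup.center G, ∀ m : ℕ, 1 ≤ m → c ^ m = 1 → c = 1)
    (zb : G ⧸ Subgroup.center G) (hzb : zb ∈ Subgroup.center (G ⧸ Subgroup.center G))
    (m : ℕ) (hm : 1 ≤ m) (hzm : zb ^ m = 1) : zb = 1 := by
  set φ := QuotientGroup.mk' (Subgroup.center G) with hφ
  obtain ⟨z, rfl⟩ := QuotientGroup.mk'_surjective (Subgroup.center G) zb
  have hz2 : ∀ x : G, z * x * z⁻¹ * x⁻¹ ∈ Subgroup.center G := by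
    intro x
    have h1 : φ (z * x * z⁻¹ * x⁻¹) = 1 := by
      rw [map_mul, map_mul, map_mul, map_inv, map_inv, hzb.comm (φ x)]
      rw [hφ]
      group
    rwa [← QuotientGroup.ker_mk' (Subgroup.center G), MonoidHom.mem_ker]
  have hzk : z ^ m ∈ Subgroup.center G := by
    have h1 : φ (z ^ m) = 1 := by rw [map_pow]; exact hzm
    rwa [← QuotientGroup.ker_mk' (Subgroup.center G), MonoidHom.mem_ker]
  have key : ∀ x : G, z * x * z⁻¹ * x⁻¹ = 1 := fun x =>
    hkill _ (hz2 x) m hm (comm_pow_eq_one hzk hz2 x)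
  have hzc : z ∈ Subgroup.center G := by
    rw [Subgroup.mem_center_iff]
    intro x
    have h1 := key x
    have h2 : z * x * z⁻¹ * x⁻¹ * (x * z) = 1 * (x * z) := by rw [h1]
    have h3 : z * x = x * z := by
      calc z * x = z * x * z⁻¹ * x⁻¹ * (x * z) := by group
        _ = 1 * (x * z) := h2
        _ = x * z := one_mul _
    exact h3.symm
  show φ z = 1
  rwa [← QuotientGroup.ker_mk' (Subgroup.center G), MonoidHom.mem_ker] at hzc

/-- In a nilpotent group whose center has no nontrivial torsion, there is no
nontrivial torsion at all. -/
private lemma torsionfree_of_center_torsionfree (G : Type*) [Group G]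
    [Group.IsNilpotent G] :
    (∀ c ∈ Subgroup.center G, ∀ m : ℕ, 1 ≤ m → c ^ m = 1 → c = 1) →
    ∀ g : G, ∀ m : ℕ, 1 ≤ m → g ^ m = 1 → g = 1 := by
  refine nilpotent_center_quotient_ind
    (P := fun G _ _ =>
      (∀ c ∈ Subgroup.center G, ∀ m : ℕ, 1 ≤ m → c ^ m = 1 → c = 1) →
      ∀ g : G, ∀ m : ℕ, 1 ≤ m → g ^ m = 1 → g = 1) G ?_ ?_
  · intro G _ _ _ g _ _ _
    exact Subsingleton.elim g 1
  · intro G _ _ ih hZ g m hm hgm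
    have hq : QuotientGroup.mk' (Subgroup.center G) g = 1 := by
      apply ih (center_quotient_torsion_trivial hZ) _ m hm
      rw [← map_pow, hgm, map_one]
    have hgZ : g ∈ Subgroup.center G := by
      rwa [← QuotientGroup.ker_mk' (Subgroup.center G), MonoidHom.mem_ker]
    exact hZ g hgZ m hm hgm

/-- Unique roots in torsion-free nilpotent groups. -/
private lemma unique_roots (G : Type*) [Group G] [Group.IsNilpotent G] :
    (∀ g : G, ∀ m : ℕ, 1 ≤ m → g ^ m = 1 → g = 1) →
    ∀ k : ℕ, 1 ≤ k → ∀ x y : G, x ^ k = y ^ k → x = y := by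
  refine nilpotent_center_quotient_ind
    (P := fun G _ _ =>
      (∀ g : G, ∀ m : ℕ, 1 ≤ m → g ^ m = 1 → g = 1) →
      ∀ k : ℕ, 1 ≤ k → ∀ x y : G, x ^ k = y ^ k → x = y) G ?_ ?_
  · intro G _ _ _ _ _ x y _
    exact Subsingleton.elim x y
  · intro G _ _ ih htf k hk x y hxy
    set φ := QuotientGroup.mk' (Subgroup.center G) with hφ
    -- the quotient by the center is torsion-free
    have hqtf : ∀ g : G ⧸ Subgroup.center G, ∀ m : ℕ, 1 ≤ m → g ^ m = 1 → g = 1 :=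
      torsionfree_of_center_torsionfree _
        (fun c hc m hm hcm =>
          center_quotient_torsion_trivial
            (fun c' _ m' hm' hcm' => htf c' m' hm' hcm') c hc m hm hcm)
    have hq : φ x = φ y := by
      apply ih hqtf k hk
      rw [← map_pow, ← map_pow, hxy]
    have hz : y⁻¹ * x ∈ Subgroup.center G := by
      rw [← QuotientGroup.ker_mk' (Subgroup.center G), MonoidHom.mem_ker, map_mul,
        map_inv, hq]
      rw [hφ]
      group
    set z := y⁻¹ * x with hzdef
    have hx : x = y * z := by rw [hzdef]; group
    have hcyz : Commute y z := (hz.comm y).symm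
    have hzk : z ^ k = 1 := by
      have h1 : y ^ k * z ^ k = y ^ k := by
        rw [← Commute.mul_pow hcyz, ← hx, hxy]
      have h2 : y ^ k * z ^ k = y ^ k * 1 := by rw [h1, mul_one]
      exact mul_left_cancel h2
    have : z = 1 := htf z k hk hzk
    rw [hx, this, mul_one]

theorem stmt_15 (G : Type*) [Group G] [Group.IsNilpotent G]
    (htf : Monoid.IsTorsionFree G) (k : ℕ) (hk : 1 ≤ k) :
    Function.Injective (fun x : G => x ^ k) := by
  intro x y hxy
  have htf' : ∀ g : G, ∀ m : ℕ, 1 ≤ m → g ^ m = 1 → g = 1 := by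
    intro g m hm hg
    by_contra hne
    exact htf g hne (isOfFinOrder_iff_pow_eq_one.mpr ⟨m, hm, hg⟩)
  exact unique_roots G htf' k hk x y hxy
end

section
/- Let m ≥ 2 be even and let ρ : BS(1,m) → T_n(ℤ[1/m]) be an injective group homomorphism into the upper triangular matrices. Then ρ(a) is unipotent, i.e. ρ maps the generator a (and hence the normal subgroup ℤ[1/m]) into U_n(ℤ[1/m]). -/
/-- The single defining relator `t a t⁻¹ a⁻ᵐ` of `BS(1,m)`, with `false ↦ a`, `true ↦ t`. -/
def BSrel (m : ℕ) : Set (FreeGroup Bool) :=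
  {FreeGroup.of true * FreeGroup.of false * (FreeGroup.of true)⁻¹ *
    (FreeGroup.of false) ^ (-(m : ℤ))}

/-- The Baumslag–Solitar group `BS(1,m) = ⟨a, t ∣ t a t⁻¹ = aᵐ⟩`. -/
abbrev BS (m : ℕ) := PresentedGroup (BSrel m)

/-- The generator `a` of `BS(1,m)`. -/
def BSa (m : ℕ) : BS m := PresentedGroup.of false

/-- The generator `t` of `BS(1,m)`. -/
def BSt (m : ℕ) : BS m := PresentedGroup.of true

lemma BS_rel (m : ℕ) :
    BSt m * BSa m * (BSt m)⁻¹ * (BSa m) ^ (-(m : ℤ)) = 1 := by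
  have h : (PresentedGroup.mk (BSrel m))
      (FreeGroup.of true * FreeGroup.of false * (FreeGroup.of true)⁻¹ *
        (FreeGroup.of false) ^ (-(m : ℤ))) = 1 := by
    apply (QuotientGroup.eq_one_iff _).mpr
    exact Subgroup.subset_normalClosure rfl
  simpa [BSa, BSt, PresentedGroup.of, PresentedGroup.mk, map_mul, map_inv, map_zpow] using h

/-- The diagonal entry map as a monoid hom to `ℚ`. -/
def diagHom (m n : ℕ) (ρ : BS m →* (Matrix (Fin n) (Fin n) (Zinv m))ˣ)
    (htri : ∀ g : BS m, ∀ i j : Fin n, j < i → (ρ g).val i j = 0) (i : Fin n) :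
    BS m →* ℚ where
  toFun g := ((ρ g).val i i : ℚ)
  map_one' := by
    show ((ρ 1).val i i : ℚ) = 1
    have h1 : (ρ 1).val = 1 := by rw [map_one]; rfl
    rw [h1, Matrix.one_apply_eq]
    simp
  map_mul' g h := by
    show ((ρ (g * h)).val i i : ℚ) = ((ρ g).val i i : ℚ) * ((ρ h).val i i : ℚ)
    have hv : (ρ (g * h)).val = (ρ g).val * (ρ h).val := by rw [map_mul]; rfl
    rw [hv, Matrix.mul_apply]
    push_cast
    rw [Finset.sum_eq_single i]
    · intro k _ hk
      rcases lt_or_gt_of_ne hk with hlt | hgt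
      · rw [htri g i k hlt]; simp
      · rw [htri h k i hgt]; simp
    · intro hi; exact absurd (Finset.mem_univ i) hi

theorem stmt_17 (m n : ℕ) (hm : 2 ≤ m) (hme : Even m)
    (ρ : BS m →* (Matrix (Fin n) (Fin n) (Zinv m))ˣ)
    (hinj : Function.Injective ρ)
    (htri : ∀ g : BS m, ∀ i j : Fin n, j < i → (ρ g).val i j = 0) :
    (∀ i : Fin n, (ρ (BSa m)).val i i = 1) ∧
    ∀ g ∈ Subgroup.normalClosure {BSa m}, ∀ i : Fin n, (ρ g).val i i = 1 := by
  set f : Fin n → (BS m →* ℚˣ) :=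
    fun i => (diagHom m n ρ htri i).toHomUnits with hf
  have hodd : Odd (m - 1) := Nat.Even.sub_odd (by omega) hme odd_one
  have key : ∀ i, f i (BSa m) = 1 := by
    intro i
    have hrel := congrArg (f i) (BS_rel m)
    rw [map_mul, map_mul, map_mul, map_inv, map_zpow, map_one] at hrel
    set a := f i (BSa m) with ha
    set t := f i (BSt m) with ht
    have h2 : a * a ^ (-(m : ℤ)) = 1 := by
      have := hrel
      rw [mul_comm t a, mul_assoc a t, mul_inv_cancel, mul_one] at this
      exact this
    have h3 : a ^ (m - 1) = 1 := by
      have h2' : a ^ (1 + -(m : ℤ)) = 1 := by rw [zpow_add, zpow_one]; exact h2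
      have h2'' : a ^ ((m : ℤ) - 1) = 1 := by
        have : ((m : ℤ) - 1) = -(1 + -(m : ℤ)) := by ring
        rw [this, zpow_neg, h2', inv_one]
      rw [← zpow_natCast, ← h2'']
      congr 1
      omega
    have h4 : ((a : ℚ)) ^ (m - 1) = 1 := by
      have := congrArg (Units.val) h3
      push_cast at this
      exact this
    have h5 : (a : ℚ) = 1 := by
      have := (hodd.strictMono_pow (R := ℚ)).injective (a₁ := (a : ℚ)) (a₂ := 1)
        (by simpa using h4)
      exact this
    exact Units.ext h5
  have entry : ∀ g : BS m, ∀ i : Fin n, f i g = 1 → (ρ g).val i i = 1 := by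
    intro g i hg
    have : ((ρ g).val i i : ℚ) = 1 := by
      have := congrArg Units.val hg
      simpa [hf, diagHom] using this
    exact_mod_cast this
  constructor
  · intro i
    exact entry _ i (key i)
  · intro g hg i
    refine entry _ i ?_
    have hle : Subgroup.normalClosure {BSa m} ≤ (f i).ker := by
      apply Subgroup.normalClosure_le_normal
      intro x hx
      rw [Set.mem_singleton_iff] at hx
      subst hx
      exact key i
    exact hle hg
end
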